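/- Let $S$ be a right LCM monoid with a generalised scale $N \colon S \to \mathbb{N}^\times$. If $s, t \in S$ satisfy $sS \cap tS \neq \emptyset$ and $N(s) \in N(t)\,N(S)$ (i.e., $N(t)$ divides $N(s)$ within the image of $N$), then $sS \cap tS = saS$ for some $a \in S_c$. -/
import Mathlib


/-- The principal right ideal `sS`. -/
def rIdeal {S : Type*} [Monoid S] (s : S) : Set S := {z | ∃ x, z = s * x}

/-- `S` is left cancellative. -/
def LeftCanc (S : Type*) [Monoid S] : Prop := ∀ a b c : S, a * b = a * c → b = c

/-- `s` and `t` admit a right common multiple. -/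
def Cap {S : Type*} [Monoid S] (s t : S) : Prop := (rIdeal s ∩ rIdeal t).Nonempty

/-- Any two elements with a right common multiple have a right LCM. -/
def IsRightLCM (S : Type*) [Monoid S] : Prop :=
  ∀ s t : S, Cap s t → ∃ r : S, rIdeal s ∩ rIdeal t = rIdeal r

/-- The core `S_c` of a monoid. -/
def core (S : Type*) [Monoid S] : Set S := {a | ∀ s : S, Cap a s}

/-- Core equivalence: `s ∼ t` iff `s a = t b` for some `a, b` in the core. -/
def coreEquiv {S : Type*} [Monoid S] (s t : S) : Prop :=
  ∃ a ∈ core S, ∃ b ∈ core S, s * a = t * b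

/-- The core equivalence class of `s` inside `N⁻¹(N s)`. -/
def classOf {S : Type*} [Monoid S] (N : S → ℕ) (s : S) : Set S :=
  {t | N t = N s ∧ coreEquiv s t}

/-- The set of core equivalence classes of elements of `N⁻¹(n)`. -/
def classSet {S : Type*} [Monoid S] (N : S → ℕ) (n : ℕ) : Set (Set S) :=
  {C | ∃ s, N s = n ∧ C = classOf N s}

/-- `T` is a transversal for `N⁻¹(n)/∼`. -/
def IsTransversal {S : Type*} [Monoid S] (N : S → ℕ) (n : ℕ) (T : Finset S) : Prop :=
  (∀ t ∈ T, N t = n) ∧ ∀ s : S, N s = n → ∃! t, t ∈ T ∧ coreEquiv s t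

/-- `T` is an accurate foundation set. -/
def IsAccurateFoundationSet {S : Type*} [Monoid S] (T : Finset S) : Prop :=
  (∀ s : S, ∃ f ∈ T, Cap s f) ∧ ∀ f ∈ T, ∀ f' ∈ T, f ≠ f' → ¬ Cap f f'

/-- A generalised scale on a right LCM monoid. -/
def IsGenScale {S : Type*} [Monoid S] (N : S →* ℕ) : Prop :=
  (∀ s, 0 < N s) ∧ (∃ s, N s ≠ 1) ∧
  (∀ n ∈ Set.range ⇑N, (classSet ⇑N n).ncard = n) ∧
  (∀ n ∈ Set.range ⇑N, ∀ T : Finset S, IsTransversal ⇑N n T → IsAccurateFoundationSet T)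

section Aux

variable {S : Type*} [Monoid S]

lemma one_mem_core : (1 : S) ∈ core S :=
  fun s => ⟨s, ⟨s, (one_mul s).symm⟩, ⟨1, (mul_one s).symm⟩⟩

lemma mul_mem_core {a b : S} (ha : a ∈ core S) (hb : b ∈ core S) :
    a * b ∈ core S := by
  intro x
  obtain ⟨z, ⟨p, hp⟩, ⟨q, hq⟩⟩ := ha x
  obtain ⟨z2, ⟨p', hp'⟩, ⟨q', hq'⟩⟩ := hb p
  refine ⟨a * z2, ⟨p', by rw [hp', ← mul_assoc, mul_assoc]⟩,
    ⟨q * q', by rw [hq', ← mul_assoc, ← hp, hq, mul_assoc]⟩⟩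

lemma core_of_left_factor {a' w : S} (h : a' * w ∈ core S) : a' ∈ core S := by
  intro x
  obtain ⟨z, ⟨p, hp⟩, hz2⟩ := h x
  exact ⟨z, ⟨w * p, by rw [hp, mul_assoc]⟩, hz2⟩

lemma core_lcm_factor (hlc : LeftCanc S) {a s r a'' : S}
    (ha : a ∈ core S) (hr : rIdeal a ∩ rIdeal s = rIdeal r) (hra : r = s * a'') :
    a'' ∈ core S := by
  intro x
  obtain ⟨z, ⟨p, hp⟩, ⟨q, hq⟩⟩ := ha (s * x)
  have hz : z ∈ rIdeal a ∩ rIdeal s := ⟨⟨p, hp⟩, ⟨x * q, by rw [hq, mul_assoc]⟩⟩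
  rw [hr] at hz
  obtain ⟨m, hm⟩ := hz
  have h1 : s * (x * q) = s * (a'' * m) := by
    rw [← mul_assoc, ← mul_assoc, ← hra, ← hm, hq, mul_assoc]
  exact ⟨x * q, ⟨m, hlc s _ _ h1⟩, ⟨q, rfl⟩⟩

lemma coreEquiv_refl (s : S) : coreEquiv s s :=
  ⟨1, one_mem_core, 1, one_mem_core, rfl⟩

lemma coreEquiv_symm {s t : S} (h : coreEquiv s t) : coreEquiv t s := by
  obtain ⟨a, ha, b, hb, hab⟩ := h
  exact ⟨b, hb, a, ha, hab.symm⟩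

lemma coreEquiv_trans (hlc : LeftCanc S) (hlcm : IsRightLCM S) {s t u : S}
    (h1 : coreEquiv s t) (h2 : coreEquiv t u) : coreEquiv s u := by
  obtain ⟨a, ha, b, hb, hab⟩ := h1
  obtain ⟨b', hb', c, hc, hbc⟩ := h2
  obtain ⟨rr, hrr⟩ := hlcm b b' (hb b')
  have hrmem : rr ∈ rIdeal b ∩ rIdeal b' := by
    rw [hrr]; exact ⟨1, (mul_one rr).symm⟩
  obtain ⟨⟨d, hd⟩, ⟨d', hd'⟩⟩ := hrmem
  have hd'core : d' ∈ core S := core_lcm_factor hlc hb hrr hd'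
  have hdcore : d ∈ core S :=
    core_lcm_factor hlc hb' (by rw [Set.inter_comm]; exact hrr) hd
  refine ⟨a * d, mul_mem_core ha hdcore, c * d', mul_mem_core hc hd'core, ?_⟩
  rw [← mul_assoc, hab, mul_assoc, ← hd, hd', ← mul_assoc, hbc, mul_assoc]

lemma classOf_eq (hlc : LeftCanc S) (hlcm : IsRightLCM S) (N : S → ℕ) {s t : S}
    (hNeq : N s = N t) (h : coreEquiv s t) : classOf N s = classOf N t := by
  ext z
  simp only [classOf, Set.mem_setOf_eq]
  constructor
  · rintro ⟨h1, h2⟩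
    exact ⟨h1.trans hNeq, coreEquiv_trans hlc hlcm (coreEquiv_symm h) h2⟩
  · rintro ⟨h1, h2⟩
    exact ⟨h1.trans hNeq.symm, coreEquiv_trans hlc hlcm h h2⟩

lemma exists_transversal (hlc : LeftCanc S) (hlcm : IsRightLCM S)
    (N : S → ℕ) {n : ℕ} (hfin : (classSet N n).Finite) (x : S) (hx : N x = n) :
    ∃ T : Finset S, x ∈ T ∧ IsTransversal N n T := by
  classical
  set rep : Set S → S := fun C =>
    if x ∈ C then x else if hC : C.Nonempty then hC.choose else x with hrep
  have rep_mem : ∀ C : Set S, C.Nonempty → rep C ∈ C := by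
    intro C hC
    by_cases hxc : x ∈ C
    · simp [hrep, hxc]
    · simp only [hrep, if_neg hxc, dif_pos hC]
      exact hC.choose_spec
  have class_nonempty : ∀ C ∈ classSet N n, C.Nonempty := by
    rintro C ⟨s0, hs0, rfl⟩
    exact ⟨s0, rfl, coreEquiv_refl s0⟩
  refine ⟨hfin.toFinset.image rep, ?_, ?_, ?_⟩
  · -- x ∈ T
    have hCx : classOf N x ∈ classSet N n := ⟨x, hx, rfl⟩
    have hxmem : x ∈ classOf N x := ⟨rfl, coreEquiv_refl x⟩
    refine Finset.mem_image.mpr ⟨classOf N x, hfin.mem_toFinset.mpr hCx, ?_⟩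
    simp [hrep, hxmem]
  · -- all elements map to n
    intro t ht
    obtain ⟨C, hC, rfl⟩ := Finset.mem_image.mp ht
    have hC' := hfin.mem_toFinset.mp hC
    obtain ⟨s0, hs0, rfl⟩ := hC'
    have := rep_mem _ (class_nonempty _ ⟨s0, hs0, rfl⟩)
    exact this.1.trans hs0
  · -- existence and uniqueness
    intro y hy
    have hCy : classOf N y ∈ classSet N n := ⟨y, hy, rfl⟩
    have hmem := rep_mem _ (class_nonempty _ hCy)
    refine ⟨rep (classOf N y),
      ⟨Finset.mem_image.mpr ⟨_, hfin.mem_toFinset.mpr hCy, rfl⟩, hmem.2⟩, ?_⟩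
    rintro t' ⟨ht'T, hyt'⟩
    obtain ⟨C', hC', rfl⟩ := Finset.mem_image.mp ht'T
    have hC'' := hfin.mem_toFinset.mp hC'
    obtain ⟨s', hs', rfl⟩ := hC''
    have ht'mem := rep_mem _ (class_nonempty _ ⟨s', hs', rfl⟩)
    -- classOf N s' = classOf N y
    have h1 : classOf N s' = classOf N (rep (classOf N s')) :=
      classOf_eq hlc hlcm N ht'mem.1.symm ht'mem.2
    have hNt' : N (rep (classOf N s')) = n := ht'mem.1.trans hs'
    have h2 : classOf N y = classOf N (rep (classOf N s')) :=
      classOf_eq hlc hlcm N (hy.trans hNt'.symm) hyt'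
    rw [h1, ← h2]

lemma classSet_finite {N : S →* ℕ} (hN : IsGenScale N) (u : S) :
    (classSet ⇑N (N u)).Finite := by
  have h1 := hN.2.2.1 (N u) ⟨u, rfl⟩
  rcases Set.finite_or_infinite (classSet ⇑N (N u)) with h | h
  · exact h
  · rw [h.ncard] at h1
    exact absurd h1.symm (hN.1 u).ne'

lemma coreEquiv_of_cap (hlc : LeftCanc S) (hlcm : IsRightLCM S) (N : S →* ℕ)
    (hN : IsGenScale N) {x y : S} (hxy : Cap x y) (hNeq : N x = N y) :
    coreEquiv x y := by
  obtain ⟨T, hxT, hT⟩ := exists_transversal hlc hlcm ⇑N (classSet_finite hN x) x rfl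
  have hAFS := hN.2.2.2 (N x) ⟨x, rfl⟩ T hT
  obtain ⟨f, ⟨hfT, hyf⟩, _⟩ := hT.2 y hNeq.symm
  obtain ⟨c, hc, c', hc', hcc⟩ := hyf
  obtain ⟨z, ⟨p, hp⟩, ⟨q, hq⟩⟩ := hxy
  obtain ⟨z2, ⟨d1, hd1⟩, ⟨d2, hd2⟩⟩ := hc q
  have hcapxf : Cap x f := by
    refine ⟨x * (p * d2), ⟨p * d2, rfl⟩, ⟨c' * d1, ?_⟩⟩
    rw [← mul_assoc, ← hp, hq, mul_assoc, ← hd2, hd1, ← mul_assoc, hcc, mul_assoc]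
  have hxf : x = f := by
    by_contra hne
    exact hAFS.2 x hxT f hfT hne hcapxf
  exact coreEquiv_symm (hxf ▸ (⟨c, hc, c', hc', hcc⟩ : coreEquiv y f))

end Aux

/-- If `s ⩓ t` and `N t` divides `N s` within `N(S)`, then `sS ∩ tS = saS` for some core `a`. -/
theorem lcm_in_core (S : Type*) [Monoid S] (hlc : LeftCanc S) (hlcm : IsRightLCM S)
    (N : S →* ℕ) (hN : IsGenScale N) (s t : S) (hst : Cap s t)
    (hdvd : ∃ u : S, N s = N t * N u) :
    ∃ a ∈ core S, rIdeal s ∩ rIdeal t = rIdeal (s * a) := by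
  obtain ⟨u, hu⟩ := hdvd
  obtain ⟨r, hr⟩ := hlcm s t hst
  have hrmem : r ∈ rIdeal s ∩ rIdeal t := by
    rw [hr]; exact ⟨1, (mul_one r).symm⟩
  obtain ⟨⟨a', ha'⟩, ⟨b, hb⟩⟩ := hrmem
  obtain ⟨T', huT', hT'⟩ := exists_transversal hlc hlcm ⇑N (classSet_finite hN u) u rfl
  have hAFS := hN.2.2.2 (N u) ⟨u, rfl⟩ T' hT'
  obtain ⟨f, hfT', ⟨z0, ⟨y, hy⟩, ⟨z, hz⟩⟩⟩ := hAFS.1 b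
  have hNf : N f = N u := hT'.1 f hfT'
  have hcap : Cap s (t * f) := by
    refine ⟨s * (a' * y), ⟨a' * y, rfl⟩, ⟨z, ?_⟩⟩
    rw [← mul_assoc, ← ha', hb, mul_assoc, ← hy, hz, ← mul_assoc]
  have hNeq : N s = N (t * f) := by rw [map_mul, hNf, hu]
  obtain ⟨a0, ha0, b0, hb0, heq⟩ := coreEquiv_of_cap hlc hlcm N hN hcap hNeq
  have hmem : s * a0 ∈ rIdeal s ∩ rIdeal t :=
    ⟨⟨a0, rfl⟩, ⟨f * b0, by rw [heq, mul_assoc]⟩⟩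
  rw [hr] at hmem
  obtain ⟨w, hw⟩ := hmem
  have ha0' : a0 = a' * w := hlc s _ _ (by rw [hw, ha', mul_assoc])
  exact ⟨a', core_of_left_factor (ha0' ▸ ha0), by rw [hr, ha']⟩
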